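/- Let m, d, τ, r^{-1} > 0 satisfy 4mτr^{-1} > (m − dτ)^2, and define φ(m) ∈ (−π/2, π/2) by tan(φ(m)) = (m − dτ)/sqrt(4mτr^{-1} − (m − dτ)^2). Then dφ/dm = (m + dτ)/(2m sqrt(4r^{-1}mτ − (m − dτ)^2)). -/

import Mathlib

open Set Real

/-- Derivative with respect to the inertia `m` of the Nadir phase angle `φ(m)`
defined by `tan(φ(m)) = (m - dτ)/√(4mτr⁻¹ - (m - dτ)²)`. -/
theorem stmt10 (d τ rinv : ℝ) (hd : 0 < d) (hτ : 0 < τ) (hr : 0 < rinv)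
    (φ : ℝ → ℝ)
    (hφ : ∀ x : ℝ, 0 < x → 4 * x * τ * rinv > (x - d * τ) ^ 2 →
        φ x ∈ Ioo (-(π / 2)) (π / 2) ∧
        Real.tan (φ x) = (x - d * τ) / Real.sqrt (4 * x * τ * rinv - (x - d * τ) ^ 2))
    (m : ℝ) (hm : 0 < m) (hud : 4 * m * τ * rinv > (m - d * τ) ^ 2) :
    HasDerivAt φ
      ((m + d * τ) / (2 * m * Real.sqrt (4 * rinv * m * τ - (m - d * τ) ^ 2))) m := by
  set c := d * τ with hc
  have hQm : 0 < 4 * m * τ * rinv - (m - c) ^ 2 := by linarith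
  have hsqm : 0 < Real.sqrt (4 * m * τ * rinv - (m - c) ^ 2) := Real.sqrt_pos.mpr hQm
  -- derivative of Q
  have h1 : HasDerivAt (fun x : ℝ => 4 * x * τ * rinv) (4 * τ * rinv) m := by
    simpa using (((hasDerivAt_id m).const_mul 4).mul_const τ).mul_const rinv
  have h2 : HasDerivAt (fun x : ℝ => (x - c) ^ 2) (2 * (m - c)) m := by
    simpa using ((hasDerivAt_id m).sub_const c).fun_pow 2
  have hQ : HasDerivAt (fun x : ℝ => 4 * x * τ * rinv - (x - c) ^ 2)
      (4 * τ * rinv - 2 * (m - c)) m := h1.sub h2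
  have hnum : HasDerivAt (fun x : ℝ => x - c) 1 m := (hasDerivAt_id m).sub_const c
  have hg : HasDerivAt (fun x : ℝ => (x - c) / Real.sqrt (4 * x * τ * rinv - (x - c) ^ 2))
      ((1 * Real.sqrt (4 * m * τ * rinv - (m - c) ^ 2) -
        (m - c) * ((4 * τ * rinv - 2 * (m - c)) /
          (2 * Real.sqrt (4 * m * τ * rinv - (m - c) ^ 2)))) /
        Real.sqrt (4 * m * τ * rinv - (m - c) ^ 2) ^ 2) m :=
    hnum.div (hQ.sqrt hQm.ne') hsqm.ne'
  have harc := hg.arctan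
  -- φ agrees with the arctan formula near m
  have hev : φ =ᶠ[nhds m]
      fun x => Real.arctan ((x - c) / Real.sqrt (4 * x * τ * rinv - (x - c) ^ 2)) := by
    have e1 : ∀ᶠ x in nhds m, 0 < x := eventually_gt_nhds hm
    have e2 : ∀ᶠ x in nhds m, 0 < 4 * x * τ * rinv - (x - c) ^ 2 :=
      hQ.continuousAt.eventually (eventually_gt_nhds hQm)
    filter_upwards [e1, e2] with x hx1 hx2'
    have hx2 : 4 * x * τ * rinv > (x - c) ^ 2 := by linarith
    obtain ⟨⟨hl, hr'⟩, htan⟩ := hφ x hx1 hx2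
    rw [← htan, Real.arctan_tan hl hr']
  have key := harc.congr_of_eventuallyEq hev
  refine key.congr_deriv ?_
  symm
  have hs2 : Real.sqrt (4 * m * τ * rinv - (m - c) ^ 2) ^ 2
      = 4 * m * τ * rinv - (m - c) ^ 2 := Real.sq_sqrt hQm.le
  rw [show 4 * rinv * m * τ - (m - c) ^ 2 = 4 * m * τ * rinv - (m - c) ^ 2 from by ring]
  set s := Real.sqrt (4 * m * τ * rinv - (m - c) ^ 2) with hs
  have hden : 1 + ((m - c) / s) ^ 2 ≠ 0 := by positivity
  field_simp
  linear_combination (c - m) * hs2
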